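/- arXiv:1507.07209 — 2 statements merged into one kernel-verified Lean document; each statement's English description precedes it below -/
import Mathlib

section
/- Let X = {1,2,3,4} and let G_m consist of 2 copies of T1 (clusters {1,2},{1,2,3}), 2 copies of T12 (clusters {3,4},{2,3,4}), 1 copy of T14 (clusters {1,3},{2,4}) and 1 copy of T15 (clusters {1,4},{2,3}). Then the balanced tree T13 with clusters {1,2},{3,4} is the unique minimizer of the total MDC score Σ_{T in G_m} l(T,S) over all 15 rooted binary trees S on X, with total score 8, even though T13 does not occur in G_m. -/
open scoped Classical

/-- A rooted binary phylogenetic tree on the leaf set `L ⊆ X`, encoded (as usual,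
and as in the paper) by its set of clusters: a binary hierarchy on `L` containing
`L` and all singletons. -/
structure PTree (X : Type*) [DecidableEq X] (L : Finset X) where
  clusters : Finset (Finset X)
  subset_leaves : ∀ C ∈ clusters, C ⊆ L
  cluster_nonempty : ∀ C ∈ clusters, C.Nonempty
  leaves_mem : L ∈ clusters
  singleton_mem : ∀ x ∈ L, ({x} : Finset X) ∈ clusters
  hierarchy : ∀ C ∈ clusters, ∀ D ∈ clusters, C ⊆ D ∨ D ⊆ C ∨ Disjoint C D
  binary : ∀ C ∈ clusters, 1 < C.card →
    ∃ A ∈ clusters, ∃ B ∈ clusters, Disjoint A B ∧ A ∪ B = C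

variable {X : Type*} [DecidableEq X]

/-- The maximal members of the cluster family `Tcl` contained in `C`. -/
noncomputable def maxClustersIn (Tcl : Finset (Finset X)) (C : Finset X) :
    Finset (Finset X) :=
  Tcl.filter (fun D => D ⊆ C ∧ ∀ D' ∈ Tcl, D ⊂ D' → ¬ D' ⊆ C)

/-- `k_T(C)`: the number of maximal clusters of `T` contained in `C`. -/
noncomputable def kOf (Tcl : Finset (Finset X)) (C : Finset X) : ℕ :=
  (maxClustersIn Tcl C).card

/-- MDC score computed from cluster families: the sum over nontrivial clusters `C`
of the species tree (clusters other than the leaf set `L` and singletons) of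
`k_T(C) - 1` (Nakhleh et al.'s formula). -/
noncomputable def mdcOfClusters (Tcl Scl : Finset (Finset X)) (L : Finset X) : ℕ :=
  ∑ C ∈ Scl.filter (fun C => C ≠ L ∧ C.card ≠ 1), (kOf Tcl C - 1)

/-- The MDC score `l(T,S)` of a gene tree `T` with respect to a species tree `S`. -/
noncomputable def mdc {L : Finset X} (T S : PTree X L) : ℕ :=
  mdcOfClusters T.clusters S.clusters L

/-- The cluster set of the restriction `T|_Y` of `T` to the leaf set `Y`:
the nonempty intersections of clusters of `T` with `Y`. -/
noncomputable def restrictClusters {L : Finset X} (T : PTree X L) (Y : Finset X) :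
    Finset (Finset X) :=
  (T.clusters.image (· ∩ Y)).filter (fun C => C.Nonempty)

/-- The full cluster set of a rooted binary tree on leaf set `{0,1,2,3} = Fin 4`
with nontrivial clusters `a` and `b`. -/
noncomputable def cl4 (a b : Finset (Fin 4)) : Finset (Finset (Fin 4)) :=
  {Finset.univ, {0}, {1}, {2}, {3}, a, b}

/-! ### Auxiliary material -/

lemma ptree_ext {L : Finset X} {S T : PTree X L} (h : S.clusters = T.clusters) :
    S = T := by
  cases S; cases T; simp_all

/-- Total weighted MDC score of the gene-tree multiset `G_m` against species
cluster family `Scl`. -/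
noncomputable def totalG (Scl : Finset (Finset (Fin 4))) : ℕ :=
  2 * mdcOfClusters (cl4 {0,1} {0,1,2}) Scl Finset.univ +
  2 * mdcOfClusters (cl4 {2,3} {1,2,3}) Scl Finset.univ +
  1 * mdcOfClusters (cl4 {0,2} {1,3}) Scl Finset.univ +
  1 * mdcOfClusters (cl4 {0,3} {1,2}) Scl Finset.univ

lemma totalG_T13 : totalG (cl4 {0,1} {2,3}) = 8 := by decide

lemma totalG_ge : ∀ a b : Finset (Fin 4),
    ((Disjoint a b ∧ a ∪ b = Finset.univ ∧ a.card = 2 ∧ b.card = 2) ∨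
     (a ⊂ b ∧ a.card = 2 ∧ b.card = 3)) →
    cl4 a b ≠ cl4 {0,1} {2,3} → 9 ≤ totalG (cl4 a b) := by decide

lemma card_le_four (C : Finset (Fin 4)) : C.card ≤ 4 := by
  have := Finset.card_le_card (Finset.subset_univ C)
  simpa using this

/-- Balanced case: if the clusters contain two disjoint 2-sets covering everything,
the cluster family is exactly `cl4 A B`. -/
lemma bal_case (S : PTree (Fin 4) Finset.univ) {A B : Finset (Fin 4)}
    (hA : A ∈ S.clusters) (hB : B ∈ S.clusters) (hAB : Disjoint A B)
    (hU : A ∪ B = Finset.univ) (hA2 : A.card = 2) (hB2 : B.card = 2) :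
    S.clusters = cl4 A B := by
  have hsubB : ∀ C : Finset (Fin 4), Disjoint C A → C ⊆ B := by
    intro C hd x hx
    have hxu : x ∈ A ∪ B := by rw [hU]; exact Finset.mem_univ x
    rcases Finset.mem_union.mp hxu with h | h
    · exact absurd h (Finset.disjoint_left.mp hd hx)
    · exact h
  ext C
  simp only [cl4, Finset.mem_insert, Finset.mem_singleton]
  constructor
  · intro hC
    have h1 : 1 ≤ C.card := Finset.card_pos.mpr (S.cluster_nonempty C hC)
    have h4 := card_le_four C
    have hcases : C.card = 1 ∨ C.card = 2 ∨ C.card = 3 ∨ C.card = 4 := by omega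
    rcases hcases with h | h | h | h
    · obtain ⟨x, hx⟩ := Finset.card_eq_one.mp h
      subst hx
      fin_cases x <;> simp
    · -- C has card 2: it is A or B
      rcases S.hierarchy C hC A hA with hs | hs | hs
      · exact Or.inr (Or.inr (Or.inr (Or.inr (Or.inr (Or.inl
          (Finset.eq_of_subset_of_card_le hs (by omega)))))))
      · exact Or.inr (Or.inr (Or.inr (Or.inr (Or.inr (Or.inl
          (Finset.eq_of_subset_of_card_le hs (by omega)).symm)))))
      · have hCB : C ⊆ B := hsubB C hs
        exact Or.inr (Or.inr (Or.inr (Or.inr (Or.inr (Or.inr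
          (Finset.eq_of_subset_of_card_le hCB (by omega)))))))
    · -- C has card 3: impossible
      exfalso
      have hAC : A ⊆ C := by
        rcases S.hierarchy C hC A hA with hs | hs | hs
        · exact absurd (Finset.card_le_card hs) (by omega)
        · exact hs
        · have := Finset.card_le_card (hsubB C hs); omega
      have hBC : B ⊆ C := by
        rcases S.hierarchy C hC B hB with hs | hs | hs
        · exact absurd (Finset.card_le_card hs) (by omega)
        · exact hs
        · have hCA : C ⊆ A := by
            intro x hx
            have hxu : x ∈ A ∪ B := by rw [hU]; exact Finset.mem_univ x
            rcases Finset.mem_union.mp hxu with h' | h'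
            · exact h'
            · exact absurd h' (Finset.disjoint_left.mp hs hx)
          have := Finset.card_le_card hCA; omega
      have : (Finset.univ : Finset (Fin 4)) ⊆ C := by
        rw [← hU]; exact Finset.union_subset hAC hBC
      have := Finset.card_le_card this
      simp at this; omega
    · left
      exact Finset.eq_univ_of_card C (by simpa using h)
  · rintro (h | h | h | h | h | h | h) <;> subst h
    · exact S.leaves_mem
    · exact S.singleton_mem 0 (Finset.mem_univ 0)
    · exact S.singleton_mem 1 (Finset.mem_univ 1)
    · exact S.singleton_mem 2 (Finset.mem_univ 2)
    · exact S.singleton_mem 3 (Finset.mem_univ 3)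
    · exact hA
    · exact hB

/-- Caterpillar case: if the clusters contain a 3-set, the family is `cl4 P B`
for some 2-set `P ⊂ B`. -/
lemma cat_case (S : PTree (Fin 4) Finset.univ) {B : Finset (Fin 4)}
    (hB : B ∈ S.clusters) (hB3 : B.card = 3) :
    ∃ P, S.clusters = cl4 P B ∧ P ⊂ B ∧ P.card = 2 := by
  obtain ⟨A', hA', B', hB', hd, hu⟩ := S.binary B hB (by omega)
  have hsum : A'.card + B'.card = 3 := by
    rw [← Finset.card_union_of_disjoint hd, hu, hB3]
  have h1 : 1 ≤ A'.card := Finset.card_pos.mpr (S.cluster_nonempty _ hA')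
  have h2 : 1 ≤ B'.card := Finset.card_pos.mpr (S.cluster_nonempty _ hB')
  have hP : ∃ P ∈ S.clusters, P.card = 2 ∧ P ⊆ B := by
    rcases (by omega : A'.card = 2 ∨ B'.card = 2) with h | h
    · exact ⟨A', hA', h, hu ▸ Finset.subset_union_left⟩
    · exact ⟨B', hB', h, hu ▸ Finset.subset_union_right⟩
  obtain ⟨P, hPm, hP2, hPB⟩ := hP
  refine ⟨P, ?_, Finset.ssubset_iff_subset_ne.mpr ⟨hPB, fun h => by
    rw [h] at hP2; omega⟩, hP2⟩
  ext C
  simp only [cl4, Finset.mem_insert, Finset.mem_singleton]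
  constructor
  · intro hC
    have h1' : 1 ≤ C.card := Finset.card_pos.mpr (S.cluster_nonempty C hC)
    have h4 := card_le_four C
    have hcases : C.card = 1 ∨ C.card = 2 ∨ C.card = 3 ∨ C.card = 4 := by omega
    have hnotdis : ¬ Disjoint C B ∨ C.card + B.card ≤ 4 := by
      by_cases hdis : Disjoint C B
      · right
        have : (C ∪ B).card ≤ 4 := card_le_four _
        rw [Finset.card_union_of_disjoint hdis] at this
        exact this
      · left; exact hdis
    rcases hcases with h | h | h | h
    · obtain ⟨x, hx⟩ := Finset.card_eq_one.mp h
      subst hx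
      fin_cases x <;> simp
    · -- card 2 : C = P
      have hCB : C ⊆ B := by
        rcases S.hierarchy C hC B hB with hs | hs | hs
        · exact hs
        · exact absurd (Finset.card_le_card hs) (by omega)
        · exfalso
          have : (C ∪ B).card ≤ 4 := card_le_four _
          rw [Finset.card_union_of_disjoint hs] at this
          omega
      rcases S.hierarchy C hC P hPm with hs | hs | hs
      · exact Or.inr (Or.inr (Or.inr (Or.inr (Or.inr (Or.inl
          (Finset.eq_of_subset_of_card_le hs (by omega)))))))
      · exact Or.inr (Or.inr (Or.inr (Or.inr (Or.inr (Or.inl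
          (Finset.eq_of_subset_of_card_le hs (by omega)).symm)))))
      · exfalso
        have hsub : C ∪ P ⊆ B := Finset.union_subset hCB hPB
        have := Finset.card_le_card hsub
        rw [Finset.card_union_of_disjoint hs] at this
        omega
    · -- card 3 : C = B
      rcases S.hierarchy C hC B hB with hs | hs | hs
      · exact Or.inr (Or.inr (Or.inr (Or.inr (Or.inr (Or.inr
          (Finset.eq_of_subset_of_card_le hs (by omega)))))))
      · exact Or.inr (Or.inr (Or.inr (Or.inr (Or.inr (Or.inr
          (Finset.eq_of_subset_of_card_le hs (by omega)).symm)))))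
      · exfalso
        have : (C ∪ B).card ≤ 4 := card_le_four _
        rw [Finset.card_union_of_disjoint hs] at this
        omega
    · left
      exact Finset.eq_univ_of_card C (by simpa using h)
  · rintro (h | h | h | h | h | h | h) <;> subst h
    · exact S.leaves_mem
    · exact S.singleton_mem 0 (Finset.mem_univ 0)
    · exact S.singleton_mem 1 (Finset.mem_univ 1)
    · exact S.singleton_mem 2 (Finset.mem_univ 2)
    · exact S.singleton_mem 3 (Finset.mem_univ 3)
    · exact hPm
    · exact hB

/-- Classification of binary trees on 4 leaves. -/
lemma classify (S : PTree (Fin 4) Finset.univ) :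
    ∃ a b, S.clusters = cl4 a b ∧
      ((Disjoint a b ∧ a ∪ b = Finset.univ ∧ a.card = 2 ∧ b.card = 2) ∨
       (a ⊂ b ∧ a.card = 2 ∧ b.card = 3)) := by
  have hu : (Finset.univ : Finset (Fin 4)) ∈ S.clusters := S.leaves_mem
  obtain ⟨A, hA, B, hB, hd, hUn⟩ := S.binary _ hu (by simp)
  have hsum : A.card + B.card = 4 := by
    rw [← Finset.card_union_of_disjoint hd, hUn]; simp
  have h1 : 1 ≤ A.card := Finset.card_pos.mpr (S.cluster_nonempty _ hA)
  have h2 : 1 ≤ B.card := Finset.card_pos.mpr (S.cluster_nonempty _ hB)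
  rcases (by omega : A.card = 3 ∨ B.card = 3 ∨ (A.card = 2 ∧ B.card = 2)) with h | h | ⟨hA2, hB2⟩
  · obtain ⟨P, hcl, hss, hP2⟩ := cat_case S hA h
    exact ⟨P, A, hcl, Or.inr ⟨hss, hP2, h⟩⟩
  · obtain ⟨P, hcl, hss, hP2⟩ := cat_case S hB h
    exact ⟨P, B, hcl, Or.inr ⟨hss, hP2, h⟩⟩
  · exact ⟨A, B, bal_case S hA hB hd hUn hA2 hB2, Or.inl ⟨hd, hUn, hA2, hB2⟩⟩

/-- Example 2: with `G_m` = 2 copies of `T₁`, 2 of `T₁₂`, 1 of `T₁₄`, 1 of `T₁₅`,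
the balanced tree `T₁₃` is the unique minimizer of the total MDC score, with score 8,
even though `T₁₃` does not occur in `G_m`. -/
theorem stmt13 (T1 T12 T13 T14 T15 : PTree (Fin 4) Finset.univ)
    (h1 : T1.clusters = cl4 {0,1} {0,1,2})
    (h12 : T12.clusters = cl4 {2,3} {1,2,3})
    (h13 : T13.clusters = cl4 {0,1} {2,3})
    (h14 : T14.clusters = cl4 {0,2} {1,3})
    (h15 : T15.clusters = cl4 {0,3} {1,2}) :
    2 * mdc T1 T13 + 2 * mdc T12 T13 + 1 * mdc T14 T13 + 1 * mdc T15 T13 = 8 ∧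
    (∀ S : PTree (Fin 4) Finset.univ, S ≠ T13 →
      2 * mdc T1 T13 + 2 * mdc T12 T13 + 1 * mdc T14 T13 + 1 * mdc T15 T13 < 2 * mdc T1 S + 2 * mdc T12 S + 1 * mdc T14 S + 1 * mdc T15 S) ∧
    T13 ≠ T1 ∧ T13 ≠ T12 ∧ T13 ≠ T14 ∧ T13 ≠ T15 := by
  have e : ∀ S' : PTree (Fin 4) Finset.univ,
      2 * mdc T1 S' + 2 * mdc T12 S' + 1 * mdc T14 S' + 1 * mdc T15 S' =
        totalG S'.clusters := by
    intro S'
    simp only [mdc, totalG, h1, h12, h14, h15]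
  have hL : 2 * mdc T1 T13 + 2 * mdc T12 T13 + 1 * mdc T14 T13 + 1 * mdc T15 T13 = 8 := by
    rw [e, h13, totalG_T13]
  refine ⟨hL, ?_, ?_, ?_, ?_, ?_⟩
  · intro S hS
    rw [hL, e]
    obtain ⟨a, b, hcl, hcond⟩ := classify S
    have hne : cl4 a b ≠ cl4 {0,1} {2,3} := by
      intro h
      exact hS (ptree_ext (by rw [hcl, h, h13]))
    have := totalG_ge a b hcond hne
    rw [hcl]
    omega
  · intro h; rw [h] at h13; rw [h13] at h1; exact absurd h1 (by decide)
  · intro h; rw [h] at h13; rw [h13] at h12; exact absurd h12 (by decide)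
  · intro h; rw [h] at h13; rw [h13] at h14; exact absurd h14 (by decide)
  · intro h; rw [h] at h13; rw [h13] at h15; exact absurd h15 (by decide)
end

section
/- There exists a multiset G_m of rooted binary gene trees on X = {1,2,3,4} and a tree S on X such that S is the unique minimizer of the total MDC score Σ_{T in G_m} l(T,S') over all rooted binary trees S' on X, but for every proper 3-element subset Y ⊂ X, the restriction S|_Y is not a minimizer of Σ_{T in G_m} l(T|_Y, S'') over rooted binary trees S'' on Y. (I.e., MDC is non-hereditary.) -/
open scoped Classical

variable {X : Type*} [DecidableEq X]

/- ---------- auxiliary material ---------- -/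

lemma PTree.ext' {L : Finset X} {T T' : PTree X L} (h : T.clusters = T'.clusters) :
    T = T' := by
  cases T; cases T'; simp_all

def lam (C D : Finset (Fin 4)) : Prop := C ⊆ D ∨ D ⊆ C ∨ Disjoint C D

instance (C D : Finset (Fin 4)) : Decidable (lam C D) :=
  inferInstanceAs (Decidable (_ ∨ _ ∨ _))

def pairs18 : List (Finset (Fin 4) × Finset (Fin 4)) :=
  [({0,1},{0,1,2}), ({0,2},{0,1,2}), ({1,2},{0,1,2}),
   ({0,1},{0,1,3}), ({0,3},{0,1,3}), ({1,3},{0,1,3}),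
   ({0,2},{0,2,3}), ({0,3},{0,2,3}), ({2,3},{0,2,3}),
   ({1,2},{1,2,3}), ({1,3},{1,2,3}), ({2,3},{1,2,3}),
   ({0,1},{2,3}), ({2,3},{0,1}), ({0,2},{1,3}), ({1,3},{0,2}),
   ({0,3},{1,2}), ({1,2},{0,3})]

lemma L1 : ∀ A B : Finset (Fin 4), A.Nonempty → B.Nonempty → Disjoint A B →
    A ∪ B = Finset.univ →
    (A.card = 3 ∧ B.card = 1) ∨ (B.card = 3 ∧ A.card = 1) ∨
    (A.card = 2 ∧ (A,B) ∈ pairs18) := by decide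

set_option maxRecDepth 10000 in
lemma inner3 : ∀ c A' B' : Finset (Fin 4), c.card = 3 → A'.Nonempty → B'.Nonempty →
    Disjoint A' B' → A' ∪ B' = c →
    (A'.card = 2 ∧ (A',c) ∈ pairs18) ∨ (B'.card = 2 ∧ (B',c) ∈ pairs18) := by decide

set_option maxRecDepth 100000 in
lemma lamlem : ∀ p q : Finset (Fin 4), (p,q) ∈ pairs18 →
    ∀ D : Finset (Fin 4), D.Nonempty → lam D p → lam D q → D ∈ cl4 p q := by decide

lemma card3_lt {c : Finset (Fin 4)} (h : c.card = 3) : 1 < c.card := by omega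

lemma eq_cl4 (T : PTree (Fin 4) Finset.univ) (p q : Finset (Fin 4))
    (hp : p ∈ T.clusters) (hq : q ∈ T.clusters)
    (h : ∀ D : Finset (Fin 4), D.Nonempty → lam D p → lam D q → D ∈ cl4 p q) :
    T.clusters = cl4 p q := by
  apply Finset.Subset.antisymm
  · intro D hD
    exact h D (T.cluster_nonempty D hD) (T.hierarchy D hD p hp) (T.hierarchy D hD q hq)
  · intro D hD
    simp only [cl4, Finset.mem_insert, Finset.mem_singleton] at hD
    rcases hD with rfl | rfl | rfl | rfl | rfl | rfl | rfl
    · exact T.leaves_mem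
    · exact T.singleton_mem _ (Finset.mem_univ _)
    · exact T.singleton_mem _ (Finset.mem_univ _)
    · exact T.singleton_mem _ (Finset.mem_univ _)
    · exact T.singleton_mem _ (Finset.mem_univ _)
    · exact hp
    · exact hq

lemma classify_s16 (T : PTree (Fin 4) Finset.univ) :
    ∃ p q : Finset (Fin 4), (p,q) ∈ pairs18 ∧ T.clusters = cl4 p q := by
  obtain ⟨A, hA, B, hB, hdisj, huni⟩ :=
    T.binary Finset.univ T.leaves_mem (by decide)
  have hAne := T.cluster_nonempty A hA
  have hBne := T.cluster_nonempty B hB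
  rcases L1 A B hAne hBne hdisj huni with ⟨hA3, _⟩ | ⟨hB3, _⟩ | ⟨_, hmem⟩
  · obtain ⟨A', hA', B', hB', hd', hu'⟩ := T.binary A hA (card3_lt hA3)
    rcases inner3 A A' B' hA3 (T.cluster_nonempty A' hA') (T.cluster_nonempty B' hB')
        hd' hu' with ⟨_, hmem⟩ | ⟨_, hmem⟩
    · exact ⟨A', A, hmem, eq_cl4 T A' A hA' hA (lamlem A' A hmem)⟩
    · exact ⟨B', A, hmem, eq_cl4 T B' A hB' hA (lamlem B' A hmem)⟩
  · obtain ⟨A', hA', B', hB', hd', hu'⟩ := T.binary B hB (card3_lt hB3)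
    rcases inner3 B A' B' hB3 (T.cluster_nonempty A' hA') (T.cluster_nonempty B' hB')
        hd' hu' with ⟨_, hmem⟩ | ⟨_, hmem⟩
    · exact ⟨A', B, hmem, eq_cl4 T A' B hA' hB (lamlem A' B hmem)⟩
    · exact ⟨B', B, hmem, eq_cl4 T B' B hB' hB (lamlem B' B hmem)⟩
  · exact ⟨A, B, hmem, eq_cl4 T A B hA hB (lamlem A B hmem)⟩

/- ---------- the concrete trees ---------- -/

noncomputable def mk4 (a b : Finset (Fin 4))
    (h2 : ∀ C ∈ cl4 a b, C.Nonempty)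
    (h4 : ∀ x : Fin 4, ({x} : Finset (Fin 4)) ∈ cl4 a b)
    (h5 : ∀ C ∈ cl4 a b, ∀ D ∈ cl4 a b, C ⊆ D ∨ D ⊆ C ∨ Disjoint C D)
    (h6 : ∀ C ∈ cl4 a b, 1 < C.card →
      ∃ A ∈ cl4 a b, ∃ B ∈ cl4 a b, Disjoint A B ∧ A ∪ B = C) :
    PTree (Fin 4) Finset.univ :=
  ⟨cl4 a b, fun C _ => C.subset_univ, h2,
    by simp [cl4], fun x _ => h4 x, h5, h6⟩

noncomputable def gt1 : PTree (Fin 4) Finset.univ :=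
  mk4 {0,1} {0,1,3} (by decide) (by decide) (by decide) (by decide)
noncomputable def gt2 : PTree (Fin 4) Finset.univ :=
  mk4 {0,2} {0,2,3} (by decide) (by decide) (by decide) (by decide)
noncomputable def gt3 : PTree (Fin 4) Finset.univ :=
  mk4 {0,3} {0,2,3} (by decide) (by decide) (by decide) (by decide)
noncomputable def gt4 : PTree (Fin 4) Finset.univ :=
  mk4 {1,2} {0,1,2} (by decide) (by decide) (by decide) (by decide)
noncomputable def gt5 : PTree (Fin 4) Finset.univ :=
  mk4 {0,3} {1,2} (by decide) (by decide) (by decide) (by decide)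
noncomputable def Sopt : PTree (Fin 4) Finset.univ :=
  mk4 {0,1} {0,1,2} (by decide) (by decide) (by decide) (by decide)

noncomputable def Gm0 : Multiset (PTree (Fin 4) Finset.univ) :=
  11 • {gt1} + 10 • {gt2} + 2 • {gt3} + 3 • {gt4} + 3 • {gt5}

lemma sum_expand (f : PTree (Fin 4) Finset.univ → ℕ) :
    (Gm0.map f).sum = 11 * f gt1 + 10 * f gt2 + 2 * f gt3 + 3 * f gt4 + 3 * f gt5 := by
  simp [Gm0, Multiset.map_nsmul, Multiset.sum_nsmul, smul_eq_mul]

noncomputable def tot (Scl : Finset (Finset (Fin 4))) : ℕ :=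
  11 * mdcOfClusters (cl4 {0,1} {0,1,3}) Scl Finset.univ +
  10 * mdcOfClusters (cl4 {0,2} {0,2,3}) Scl Finset.univ +
  2 * mdcOfClusters (cl4 {0,3} {0,2,3}) Scl Finset.univ +
  3 * mdcOfClusters (cl4 {1,2} {0,1,2}) Scl Finset.univ +
  3 * mdcOfClusters (cl4 {0,3} {1,2}) Scl Finset.univ

lemma tot_eq (S' : PTree (Fin 4) Finset.univ) :
    (Gm0.map (fun T => mdc T S')).sum = tot S'.clusters := by
  rw [sum_expand]; rfl

set_option maxRecDepth 10000 in
lemma main1 : ∀ p q : Finset (Fin 4), (p,q) ∈ pairs18 →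
    cl4 p q ≠ cl4 {0,1} {0,1,2} →
    tot (cl4 {0,1} {0,1,2}) < tot (cl4 p q) := by decide

/- ---------- part 2 trees on three leaves ---------- -/

noncomputable def mk3 (Y : Finset (Fin 4)) (cls : Finset (Finset (Fin 4)))
    (h1 : ∀ C ∈ cls, C ⊆ Y) (h2 : ∀ C ∈ cls, C.Nonempty) (h3 : Y ∈ cls)
    (h4 : ∀ x ∈ Y, ({x} : Finset (Fin 4)) ∈ cls)
    (h5 : ∀ C ∈ cls, ∀ D ∈ cls, C ⊆ D ∨ D ⊆ C ∨ Disjoint C D)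
    (h6 : ∀ C ∈ cls, 1 < C.card →
      ∃ A ∈ cls, ∃ B ∈ cls, Disjoint A B ∧ A ∪ B = C) :
    PTree (Fin 4) Y := ⟨cls, h1, h2, h3, h4, h5, h6⟩

noncomputable def s012 : PTree (Fin 4) {0,1,2} :=
  mk3 _ {({0,1,2} : Finset (Fin 4)), {0}, {1}, {2}, {0,2}}
    (by decide) (by decide) (by decide) (by decide) (by decide) (by decide)
noncomputable def s013 : PTree (Fin 4) {0,1,3} :=
  mk3 _ {({0,1,3} : Finset (Fin 4)), {0}, {1}, {3}, {0,3}}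
    (by decide) (by decide) (by decide) (by decide) (by decide) (by decide)
noncomputable def s023 : PTree (Fin 4) {0,2,3} :=
  mk3 _ {({0,2,3} : Finset (Fin 4)), {0}, {2}, {3}, {0,3}}
    (by decide) (by decide) (by decide) (by decide) (by decide) (by decide)
noncomputable def s123 : PTree (Fin 4) {1,2,3} :=
  mk3 _ {({1,2,3} : Finset (Fin 4)), {1}, {2}, {3}, {2,3}}
    (by decide) (by decide) (by decide) (by decide) (by decide) (by decide)

lemma card3cases : ∀ Y : Finset (Fin 4), Y.card = 3 →
    Y = {0,1,2} ∨ Y = {0,1,3} ∨ Y = {0,2,3} ∨ Y = {1,2,3} := by decide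

/- ---------- main theorem ---------- -/

set_option maxRecDepth 10000 in
/-- Non-heredity of MDC: there is a multiset `G_m` of gene trees on 4 taxa and a tree
`S` such that `S` is the unique minimizer of the total MDC score, but for every
3-element subset `Y` the restriction `S|_Y` is not a minimizer of the total MDC score
of the restricted gene trees. -/
theorem stmt16 :
    ∃ (Gm : Multiset (PTree (Fin 4) Finset.univ)) (S : PTree (Fin 4) Finset.univ),
      (∀ S' : PTree (Fin 4) Finset.univ, S' ≠ S →
        (Gm.map (fun T => mdc T S)).sum < (Gm.map (fun T => mdc T S')).sum) ∧
      (∀ Y : Finset (Fin 4), Y ⊂ Finset.univ → Y.card = 3 →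
        ∃ S'' : PTree (Fin 4) Y,
          (Gm.map (fun T => mdcOfClusters (restrictClusters T Y) S''.clusters Y)).sum <
          (Gm.map (fun T =>
            mdcOfClusters (restrictClusters T Y) (restrictClusters S Y) Y)).sum) := by
  refine ⟨Gm0, Sopt, ?_, ?_⟩
  · intro S' hne
    obtain ⟨p, q, hmem, hcl⟩ := classify_s16 S'
    rw [tot_eq, tot_eq, hcl]
    have hSopt : Sopt.clusters = cl4 {0,1} {0,1,2} := rfl
    rw [hSopt]
    apply main1 p q hmem
    intro hEq
    exact hne (PTree.ext' (by rw [hcl, hEq, ← hSopt]))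
  · intro Y _ hY
    rcases card3cases Y hY with rfl | rfl | rfl | rfl
    · exact ⟨s012, by rw [sum_expand, sum_expand]; decide⟩
    · exact ⟨s013, by rw [sum_expand, sum_expand]; decide⟩
    · exact ⟨s023, by rw [sum_expand, sum_expand]; decide⟩
    · exact ⟨s123, by rw [sum_expand, sum_expand]; decide⟩
end
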